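/- If B ⊆ PG(k−1,q) is not a strong blocking set, then |B| ≤ qM − (q−1)m, where m and M are the minimum and maximum number of points of B on a hyperplane. -/

import Mathlib

open Projectivization Module
open scoped LinearAlgebra.Projectivization

section Helpers

variable {F V : Type*} [Field F] [AddCommGroup V] [Module F V] [FiniteDimensional F V]

lemma finrank_sup_span_le (W : Submodule F V) (v : V) :
    finrank F ↥(W ⊔ (F ∙ v)) ≤ finrank F W + 1 := by
  have h := Submodule.finrank_sup_add_finrank_inf_eq W (F ∙ v)
  have h2 : finrank F ↥(F ∙ v) ≤ 1 := by
    by_cases hv : v = 0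
    · rw [hv, Submodule.span_zero_singleton]; simp
    · rw [finrank_span_singleton hv]
  omega

lemma finrank_add_one_of_isCoatom {W : Submodule F V} (h : IsCoatom W) :
    finrank F W + 1 = finrank F V := by
  obtain ⟨v, -, hv⟩ := SetLike.exists_of_lt (lt_top_iff_ne_top.mpr h.1)
  have hlt : W < W ⊔ (F ∙ v) :=
    SetLike.lt_iff_le_and_exists.mpr
      ⟨le_sup_left, v, Submodule.mem_sup_right (Submodule.mem_span_singleton_self v), hv⟩
  have htop : W ⊔ (F ∙ v) = ⊤ := h.2 _ hlt
  have h1 : finrank F ↥(W ⊔ (F ∙ v)) ≤ finrank F W + 1 := finrank_sup_span_le W v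
  rw [htop, finrank_top] at h1
  have h2 : finrank F W < finrank F V := by
    have := Submodule.finrank_lt_finrank_of_lt (lt_top_iff_ne_top.mpr h.1)
    rwa [finrank_top] at this
  omega

lemma isCoatom_of_finrank_add_one {W : Submodule F V} (h : finrank F W + 1 = finrank F V) :
    IsCoatom W := by
  constructor
  · intro htop
    rw [htop, finrank_top] at h
    omega
  · intro Q hQ
    apply Submodule.eq_top_of_finrank_eq
    have := Submodule.finrank_lt_finrank_of_lt hQ
    have := Submodule.finrank_le Q
    omega

lemma ncard_biUnion_le {α ι : Type*} (s : Finset ι) (f : ι → Set α) :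
    (⋃ i ∈ s, f i).ncard ≤ ∑ i ∈ s, (f i).ncard := by
  classical
  induction s using Finset.induction with
  | empty => simp
  | insert a s' h ih =>
    rw [Finset.set_biUnion_insert, Finset.sum_insert h]
    exact (Set.ncard_union_le _ _).trans (by gcongr)

end Helpers

/-- A set of points of a projective space is a strong blocking set if its intersection with
every hyperplane (coatom of the submodule lattice) spans that hyperplane. -/
def IsStrongBlocking {F V : Type*} [Field F] [AddCommGroup V] [Module F V]
    (B : Set (ℙ F V)) : Prop :=
  ∀ H : Submodule F V, IsCoatom H →
    (⨆ P ∈ {P ∈ B | Projectivization.submodule P ≤ H}, Projectivization.submodule P) = H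

/-- If `B ⊆ PG(k-1,q)` is not a strong blocking set then `|B| ≤ qM - (q-1)m`, where
`m` and `M` bound from below and above the number of points of `B` on any hyperplane. -/
theorem not_strong_blocking_card_le {F : Type*} [Field F] [Fintype F] {k : ℕ}
    (B : Set (ℙ F (Fin k → F))) (m M : ℕ)
    (hm : ∀ H : Submodule F (Fin k → F), IsCoatom H →
      m ≤ {P ∈ B | Projectivization.submodule P ≤ H}.ncard)
    (hM : ∀ H : Submodule F (Fin k → F), IsCoatom H →
      {P ∈ B | Projectivization.submodule P ≤ H}.ncard ≤ M)
    (hnot : ¬ IsStrongBlocking B) :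
    (B.ncard : ℤ) ≤ (Fintype.card F) * M - ((Fintype.card F : ℤ) - 1) * m := by
  classical
  haveI : Finite (ℙ F (Fin k → F)) := Quotient.finite _
  rw [IsStrongBlocking] at hnot
  push_neg at hnot
  obtain ⟨H, hH, hSne⟩ := hnot
  set D : Set (ℙ F (Fin k → F)) := {P ∈ B | Projectivization.submodule P ≤ H} with hD
  set S : Submodule F (Fin k → F) := ⨆ P ∈ D, Projectivization.submodule P with hSdef
  have hSH : S ≤ H := iSup_le fun P => iSup_le fun hP => hP.2
  -- find a hyperplane `S'` of `H` containing `S`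
  have hcomap_ne : Submodule.comap H.subtype S ≠ ⊤ := by
    intro h
    exact hSne (le_antisymm hSH (Submodule.comap_subtype_eq_top.mp h))
  obtain ⟨T, hT, hST⟩ :=
    (eq_top_or_exists_le_coatom (Submodule.comap H.subtype S)).resolve_left hcomap_ne
  set S' : Submodule F (Fin k → F) := T.map H.subtype with hS'def
  have hS'le : S' ≤ H := Submodule.map_subtype_le H T
  have hSS' : S ≤ S' := by
    have h1 : S = Submodule.map H.subtype (Submodule.comap H.subtype S) := by
      rw [Submodule.map_comap_subtype, inf_eq_right.mpr hSH]
    rw [h1]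
    exact Submodule.map_mono hST
  -- a vector u ∈ H \ S' with S' ⊔ span u = H
  obtain ⟨x, -, hx⟩ := SetLike.exists_of_lt (lt_top_iff_ne_top.mpr hT.1)
  set u : Fin k → F := (x : Fin k → F) with hu
  have hu_mem : u ∈ H := x.2
  have hTx : T ⊔ (F ∙ x) = ⊤ :=
    hT.2 _ (SetLike.lt_iff_le_and_exists.mpr
      ⟨le_sup_left, x, Submodule.mem_sup_right (Submodule.mem_span_singleton_self x), hx⟩)
  have hS'u : S' ⊔ (F ∙ u) = H := by
    have h2 := congrArg (Submodule.map H.subtype) hTx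
    rwa [Submodule.map_sup, Submodule.map_span, Set.image_singleton,
      Submodule.map_subtype_top] at h2
  -- a vector w outside H
  obtain ⟨w, -, hw⟩ := SetLike.exists_of_lt (lt_top_iff_ne_top.mpr hH.1)
  -- dimensions
  have hk : finrank F (Fin k → F) = k := Module.finrank_fin_fun F
  have hfH : finrank F H + 1 = k := by
    have := finrank_add_one_of_isCoatom hH
    omega
  have hfT : finrank F T + 1 = finrank F H := finrank_add_one_of_isCoatom hT
  have hfS' : finrank F S' = finrank F T := Submodule.finrank_map_subtype_eq H T
  -- the other hyperplanes through S'
  set Hc : F → Submodule F (Fin k → F) := fun c => S' ⊔ (F ∙ (w + c • u)) with hHcdef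
  have hwc : ∀ c : F, w + c • u ∉ H := by
    intro c hmem
    exact hw (by simpa using H.sub_mem hmem (H.smul_mem c hu_mem))
  have hHtop : ∀ c : F, H ⊔ (F ∙ (w + c • u)) = ⊤ := by
    intro c
    exact hH.2 _ (SetLike.lt_iff_le_and_exists.mpr
      ⟨le_sup_left, w + c • u,
        Submodule.mem_sup_right (Submodule.mem_span_singleton_self _), hwc c⟩)
  have hHc_coatom : ∀ c : F, IsCoatom (Hc c) := by
    intro c
    apply isCoatom_of_finrank_add_one
    rw [hk]
    have hle : finrank F (Hc c) ≤ finrank F S' + 1 := finrank_sup_span_le _ _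
    have htop : (Hc c) ⊔ (F ∙ u) = ⊤ := by
      have e : (Hc c) ⊔ (F ∙ u) = (S' ⊔ (F ∙ u)) ⊔ (F ∙ (w + c • u)) := by
        rw [hHcdef]
        rw [sup_assoc, sup_assoc, sup_comm (F ∙ (w + c • u)) (F ∙ u)]
      rw [e, hS'u, hHtop c]
    have hge := finrank_sup_span_le (Hc c) u
    rw [htop, finrank_top, hk] at hge
    omega
  -- covering: every point of B not on H is on some Hc
  have hcover : ∀ P ∈ B, P ∉ D → ∃ c : F, Projectivization.submodule P ≤ Hc c := by
    intro P hPB hPD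
    have hPH : P.rep ∉ H := by
      intro hmem
      exact hPD ⟨hPB, by
        rw [Projectivization.submodule_eq]
        exact (Submodule.span_singleton_le_iff_mem _ _).mpr hmem⟩
    have hHw : H ⊔ (F ∙ w) = ⊤ :=
      hH.2 _ (SetLike.lt_iff_le_and_exists.mpr
        ⟨le_sup_left, w, Submodule.mem_sup_right (Submodule.mem_span_singleton_self _), hw⟩)
    have hv1 : P.rep ∈ H ⊔ (F ∙ w) := hHw ▸ Submodule.mem_top
    obtain ⟨p, hp, z, hz, hvz⟩ := Submodule.mem_sup.mp hv1
    obtain ⟨b, rfl⟩ := Submodule.mem_span_singleton.mp hz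
    rw [← hS'u] at hp
    obtain ⟨s, hs, z', hz', hpz⟩ := Submodule.mem_sup.mp hp
    obtain ⟨a, rfl⟩ := Submodule.mem_span_singleton.mp hz'
    have hb : b ≠ 0 := by
      rintro rfl
      apply hPH
      rw [← hvz, zero_smul, add_zero, ← hpz]
      exact H.add_mem (hS'le hs) (H.smul_mem a hu_mem)
    refine ⟨b⁻¹ * a, ?_⟩
    rw [Projectivization.submodule_eq]
    apply (Submodule.span_singleton_le_iff_mem _ _).mpr
    have hveq : P.rep = s + b • (w + (b⁻¹ * a) • u) := by
      rw [smul_add, smul_smul, mul_inv_cancel_left₀ hb, ← hvz, ← hpz]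
      abel
    rw [hveq]
    exact Submodule.add_mem _ (Submodule.mem_sup_left hs)
      (Submodule.mem_sup_right (Submodule.smul_mem _ b (Submodule.mem_span_singleton_self _)))
  -- counting
  set Ac : F → Set (ℙ F (Fin k → F)) :=
    fun c => {P ∈ B | Projectivization.submodule P ≤ Hc c} with hAc
  have hDA : ∀ c, D ⊆ Ac c := by
    intro c P hP
    refine ⟨hP.1, le_trans ?_ le_sup_left⟩
    refine le_trans ?_ hSS'
    rw [hSdef]
    exact le_biSup _ hP
  have hsub : B ⊆ D ∪ ⋃ c ∈ (Finset.univ : Finset F), (Ac c \ D) := by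
    intro P hP
    by_cases hPD : P ∈ D
    · exact Or.inl hPD
    · obtain ⟨c, hc⟩ := hcover P hP hPD
      exact Or.inr (Set.mem_biUnion (Finset.mem_univ c) ⟨⟨hP, hc⟩, hPD⟩)
  have hcount : B.ncard ≤ D.ncard + ∑ c : F, (Ac c \ D).ncard := by
    calc B.ncard ≤ (D ∪ ⋃ c ∈ (Finset.univ : Finset F), (Ac c \ D)).ncard :=
          Set.ncard_le_ncard hsub
      _ ≤ D.ncard + (⋃ c ∈ (Finset.univ : Finset F), (Ac c \ D)).ncard :=
          Set.ncard_union_le _ _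
      _ ≤ D.ncard + ∑ c : F, (Ac c \ D).ncard := by
          have := ncard_biUnion_le (Finset.univ : Finset F) (fun c => Ac c \ D)
          omega
  have hdiff : ∀ c : F, ((Ac c \ D).ncard : ℤ) = (Ac c).ncard - D.ncard := by
    intro c
    rw [Set.ncard_diff (hDA c)]
    have := Set.ncard_le_ncard (hDA c)
    omega
  have hAcM : ∀ c : F, (Ac c).ncard ≤ M := fun c => hM (Hc c) (hHc_coatom c)
  have hmn : m ≤ D.ncard := hm H hH
  have hq : 1 ≤ (Fintype.card F : ℤ) := by exact_mod_cast Fintype.card_pos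
  have hsum : ∑ c : F, ((Ac c \ D).ncard : ℤ) ≤ (Fintype.card F) * ((M : ℤ) - D.ncard) := by
    calc ∑ c : F, ((Ac c \ D).ncard : ℤ) ≤ ∑ _c : F, ((M : ℤ) - D.ncard) := by
          apply Finset.sum_le_sum
          intro c _
          rw [hdiff c]
          have := hAcM c
          omega
      _ = (Fintype.card F) * ((M : ℤ) - D.ncard) := by
          rw [Finset.sum_const, Finset.card_univ, nsmul_eq_mul]
  have hcount' : (B.ncard : ℤ) ≤ D.ncard + ∑ c : F, ((Ac c \ D).ncard : ℤ) := by
    exact_mod_cast hcount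
  have hfinal : (B.ncard : ℤ) ≤ D.ncard + (Fintype.card F) * ((M : ℤ) - D.ncard) :=
    hcount'.trans (by linarith)
  have hmn' : (m : ℤ) ≤ D.ncard := by exact_mod_cast hmn
  nlinarith [hfinal, hmn', hq]
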